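/- Let B be a commutative ring and P, Q be B-modules. Then P is finitely generated and projective over B if and only if there exist B-linear maps η : B → Q ⊗_B P and θ : P ⊗_B Q → B satisfying the triangle identities: the composite Q ≅ B ⊗_B Q → (Q ⊗_B P) ⊗_B Q ≅ Q ⊗_B (P ⊗_B Q) → Q ⊗_B B ≅ Q (using η ⊗ id_Q and id_Q ⊗ θ) is the identity of Q, and the composite P ≅ P ⊗_B B → P ⊗_B (Q ⊗_B P) ≅ (P ⊗_B Q) ⊗_B P → B ⊗_B P ≅ P (using id_P ⊗ η and θ ⊗ id_P) is the identity of P. In the 'only if' direction one may take Q = Hom_B(P,B). -/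

import Mathlib

open TensorProduct

/-- The two triangle identities for a pair of `B`-linear maps
`η : B → Q ⊗[B] P` (coevaluation) and `θ : P ⊗[B] Q → B` (evaluation):
the composite `Q ≅ B ⊗ Q → (Q ⊗ P) ⊗ Q ≅ Q ⊗ (P ⊗ Q) → Q ⊗ B ≅ Q` is the identity,
and the composite `P ≅ P ⊗ B → P ⊗ (Q ⊗ P) ≅ (P ⊗ Q) ⊗ P → B ⊗ P ≅ P` is the identity. -/
def TriangleIdentities (B : Type*) [CommRing B]
    (P : Type*) [AddCommGroup P] [Module B P]
    (Q : Type*) [AddCommGroup Q] [Module B Q]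
    (η : B →ₗ[B] Q ⊗[B] P) (θ : P ⊗[B] Q →ₗ[B] B) : Prop :=
  (∀ q : Q,
    (TensorProduct.rid B Q)
      ((LinearMap.lTensor Q θ)
        ((TensorProduct.assoc B Q P Q)
          ((LinearMap.rTensor Q η) ((TensorProduct.lid B Q).symm q)))) = q) ∧
  (∀ p : P,
    (TensorProduct.lid B P)
      ((LinearMap.rTensor P θ)
        ((TensorProduct.assoc B P Q P).symm
          ((LinearMap.lTensor P η) ((TensorProduct.rid B P).symm p)))) = p)

set_option synthInstance.maxHeartbeats 1000000 in
set_option maxHeartbeats 1000000 in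
/-- a `B`-module `P` is finitely generated and projective if and only if it is
dualizable, i.e. there are `η : B → Q ⊗_B P` and `θ : P ⊗_B Q → B` satisfying the triangle
identities (for the given module `Q`, the existence of such maps forces `P` to be finitely
generated projective; conversely, if `P` is finitely generated projective then such maps
exist with `Q = Hom_B(P,B)`). -/
theorem finite_projective_iff_dualizable (B : Type*) [CommRing B]
    (P : Type*) [AddCommGroup P] [Module B P]
    (Q : Type*) [AddCommGroup Q] [Module B Q] :
    ((∃ (η : B →ₗ[B] Q ⊗[B] P) (θ : P ⊗[B] Q →ₗ[B] B),
        TriangleIdentities B P Q η θ) →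
      (Module.Finite B P ∧ Module.Projective B P)) ∧
    ((Module.Finite B P ∧ Module.Projective B P) →
      ∃ (η : B →ₗ[B] (P →ₗ[B] B) ⊗[B] P) (θ : P ⊗[B] (P →ₗ[B] B) →ₗ[B] B),
        TriangleIdentities B P (P →ₗ[B] B) η θ) := by
  constructor
  · rintro ⟨η, θ, h1, h2⟩
    obtain ⟨s, hs⟩ := TensorProduct.exists_finset (η 1)
    -- dual basis equation: p = ∑ θ(p ⊗ qᵢ) • pᵢ
    have key : ∀ p : P, (∑ i ∈ s, θ (p ⊗ₜ[B] i.1) • i.2) = p := by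
      intro p
      have h := h2 p
      rw [TensorProduct.rid_symm_apply, LinearMap.lTensor_tmul, hs] at h
      simpa only [TensorProduct.tmul_sum, map_sum, TensorProduct.assoc_symm_tmul,
        LinearMap.rTensor_tmul, TensorProduct.lid_tmul] using h
    -- retraction data
    set g : P →ₗ[B] (s → B) :=
      LinearMap.pi (fun i => θ ∘ₗ (TensorProduct.mk B P Q).flip i.1.1) with hg
    set f : (s → B) →ₗ[B] P :=
      ∑ i : s, (LinearMap.proj i : (s → B) →ₗ[B] B).smulRight i.1.2 with hf
    have hfg : f.comp g = LinearMap.id := by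
      ext p
      simp only [LinearMap.comp_apply, LinearMap.id_apply, hf, hg, LinearMap.sum_apply,
        LinearMap.smulRight_apply, LinearMap.proj_apply, LinearMap.pi_apply,
        TensorProduct.mk_apply, LinearMap.flip_apply]
      rw [Finset.sum_coe_sort s (fun i => θ (p ⊗ₜ[B] i.1) • i.2)]
      exact key p
    have hsurj : Function.Surjective f := by
      intro p
      exact ⟨g p, congrArg (fun h => h p) (congrArg DFunLike.coe hfg)⟩
    constructor
    · exact Module.Finite.of_surjective f hsurj
    · exact Module.Projective.of_split g f hfg
  · rintro ⟨hfin, hproj⟩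
    obtain ⟨n, v, hv⟩ := Module.Finite.exists_fin (R := B) (M := P)
    set π : (Fin n → B) →ₗ[B] P := Fintype.linearCombination B v with hπ
    have hπsurj : Function.Surjective π := by
      rw [← LinearMap.range_eq_top, hπ, Fintype.range_linearCombination, hv]
    obtain ⟨σ, hσ⟩ := Module.projective_lifting_property π LinearMap.id hπsurj
    have hπσ : ∀ p : P, π (σ p) = p := fun p =>
      congrArg (fun h => h p) (congrArg DFunLike.coe hσ)
    refine ⟨LinearMap.toSpanSingleton B _
        (∑ i : Fin n, ((LinearMap.proj i).comp σ) ⊗ₜ[B] v i),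
      TensorProduct.lift (LinearMap.id (R := B) (M := P →ₗ[B] B)).flip, ?_, ?_⟩
    · intro q
      simp only [TensorProduct.lid_symm_apply, LinearMap.rTensor_tmul,
        LinearMap.toSpanSingleton_apply, one_smul, TensorProduct.sum_tmul, map_sum,
        TensorProduct.assoc_tmul, LinearMap.lTensor_tmul, TensorProduct.lift.tmul,
        LinearMap.flip_apply, LinearMap.id_apply, TensorProduct.rid_tmul]
      ext p
      simp only [LinearMap.coe_sum, Finset.sum_apply, LinearMap.smul_apply,
        LinearMap.comp_apply, LinearMap.proj_apply, smul_eq_mul]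
      conv_rhs => rw [← hπσ p, hπ, Fintype.linearCombination_apply, map_sum]
      refine Finset.sum_congr rfl fun i _ => ?_
      rw [map_smul, smul_eq_mul, mul_comm]
    · intro p
      simp only [TensorProduct.rid_symm_apply, LinearMap.lTensor_tmul,
        LinearMap.toSpanSingleton_apply, one_smul, TensorProduct.tmul_sum, map_sum,
        TensorProduct.assoc_symm_tmul, LinearMap.rTensor_tmul, TensorProduct.lift.tmul,
        LinearMap.flip_apply, LinearMap.id_apply, TensorProduct.lid_tmul,
        LinearMap.comp_apply, LinearMap.proj_apply]
      conv_rhs => rw [← hπσ p, hπ, Fintype.linearCombination_apply]
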